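/- Let Δ ⊆ ℝ² be the convex hull of (0,0), (1,0), (0,1) and f₂(x,y) = (y/2, 1 − x − y/2). Then f₂∘f₂ is a contraction with respect to the Euclidean metric (Lip(f₂∘f₂) < 1), and the fibre with constant address 2 is the singleton ⋂_{n≥1} f₂ⁿ(Δ) = {(1/4, 1/2)}. -/

import Mathlib

open Set

/-- The Euclidean plane `ℝ²` with the Euclidean norm. -/
abbrev E2 : Type := EuclideanSpace ℝ (Fin 2)

/-- The (smallest) Lipschitz constant of a map. -/
noncomputable def lipConst {X Y : Type*} [PseudoMetricSpace X] [PseudoMetricSpace Y]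
    (g : X → Y) : ℝ :=
  sInf {K : ℝ | 0 ≤ K ∧ ∀ x y, dist (g x) (g y) ≤ K * dist x y}

/-- The Barnsley–Vince map `f₂(x,y) = (y/2, 1 − x − y/2)`. -/
noncomputable def f2 : E2 → E2 :=
  fun v => (WithLp.equiv 2 (Fin 2 → ℝ)).symm ![v 1 / 2, 1 - v 0 - v 1 / 2]

/-- The filled triangle with vertices `(0,0)`, `(1,0)`, `(0,1)`. -/
noncomputable def Δ : Set E2 :=
  convexHull ℝ {(WithLp.equiv 2 (Fin 2 → ℝ)).symm ![0, 0],
    (WithLp.equiv 2 (Fin 2 → ℝ)).symm ![1, 0], (WithLp.equiv 2 (Fin 2 → ℝ)).symm ![0, 1]}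

/-- The fixed point `(1/4, 1/2)`. -/
noncomputable def BVfixed : E2 := (WithLp.equiv 2 (Fin 2 → ℝ)).symm ![1 / 4, 1 / 2]

lemma key_contraction (x y : E2) :
    dist (f2 (f2 x)) (f2 (f2 y)) ≤ 3 / 4 * dist x y := by
  rw [EuclideanSpace.dist_eq, EuclideanSpace.dist_eq]
  simp only [f2, WithLp.equiv_symm_apply, WithLp.ofLp_toLp, Fin.sum_univ_two, Matrix.cons_val_zero,
    Matrix.cons_val_one, Matrix.head_cons, Real.dist_eq, sq_abs]
  rw [show (3/4:ℝ) = Real.sqrt (9/16) by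
        rw [show (9/16:ℝ) = (3/4)^2 by norm_num, Real.sqrt_sq]; norm_num]
  rw [← Real.sqrt_mul (by norm_num)]
  apply Real.sqrt_le_sqrt
  nlinarith [sq_nonneg (x 0 - y 0), sq_nonneg (x 1 - y 1)]

lemma f2_fixed : f2 BVfixed = BVfixed := by
  ext i
  fin_cases i <;> simp [f2, BVfixed, WithLp.equiv_symm_apply, WithLp.ofLp_toLp] <;> norm_num

lemma Δ_bounded : Δ ⊆ Metric.closedBall 0 1 := by
  apply convexHull_min _ (convex_closedBall 0 1)
  intro v hv
  simp only [Set.mem_insert_iff, Set.mem_singleton_iff] at hv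
  rcases hv with h | h | h <;> subst h <;>
    simp [Metric.mem_closedBall, dist_zero_right, EuclideanSpace.norm_eq,
      Fin.sum_univ_two, WithLp.equiv_symm_apply, WithLp.ofLp_toLp]

lemma fixed_mem_Δ : BVfixed ∈ Δ := by
  have hm : midpoint ℝ ((WithLp.equiv 2 (Fin 2 → ℝ)).symm ![0, 0])
      ((WithLp.equiv 2 (Fin 2 → ℝ)).symm ![1, 0]) ∈ Δ :=
    (convex_convexHull ℝ _).segment_subset
      (subset_convexHull ℝ _ (by simp)) (subset_convexHull ℝ _ (by simp))
      (midpoint_mem_segment _ _)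
  have hc : (WithLp.equiv 2 (Fin 2 → ℝ)).symm ![0, 1] ∈ Δ :=
    subset_convexHull ℝ _ (by simp)
  have h2 := (convex_convexHull ℝ _).segment_subset hc hm (midpoint_mem_segment _ _)
  convert h2 using 1
  · rfl
  ext i
  fin_cases i <;>
    simp [BVfixed, midpoint_eq_smul_add, WithLp.equiv_symm_apply, WithLp.ofLp_toLp] <;> norm_num

lemma iter_contraction (m : ℕ) (x y : E2) :
    dist (f2^[2 * m] x) (f2^[2 * m] y) ≤ (3 / 4) ^ m * dist x y := by
  induction m generalizing x y with
  | zero => simp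
  | succ m ih =>
    have h1 : 2 * (m + 1) = 2 * m + 2 := by ring
    rw [h1, Function.iterate_add_apply, Function.iterate_add_apply]
    calc dist (f2^[2*m] (f2^[2] x)) (f2^[2*m] (f2^[2] y))
        ≤ (3/4)^m * dist (f2^[2] x) (f2^[2] y) := ih _ _
      _ ≤ (3/4)^m * (3/4 * dist x y) := by
          apply mul_le_mul_of_nonneg_left _ (by positivity)
          simpa [Function.iterate_succ_apply'] using key_contraction x y
      _ = (3/4)^(m+1) * dist x y := by ring

/-- `f₂∘f₂` is a contraction w.r.t. the Euclidean metric, and the fibre with constant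
address `2` is the singleton `{(1/4, 1/2)}`. -/
theorem fibre_constant_two :
    lipConst (f2 ∘ f2) < 1 ∧
    (⋂ n ∈ Set.Ici 1, f2^[n] '' Δ) =
      {(WithLp.equiv 2 (Fin 2 → ℝ)).symm ![1 / 4, 1 / 2]} := by
  constructor
  · have hle : lipConst (f2 ∘ f2) ≤ 3 / 4 := by
      apply csInf_le ⟨0, fun K hK => hK.1⟩
      exact ⟨by norm_num, fun x y => key_contraction x y⟩
    linarith
  · have hPn : ∀ n, f2^[n] BVfixed = BVfixed := fun n => Function.iterate_fixed f2_fixed n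
    ext q
    simp only [Set.mem_iInter, Set.mem_Ici, Set.mem_singleton_iff]
    constructor
    · intro hq
      have hdist : ∀ m : ℕ, 1 ≤ m → dist q BVfixed ≤ (3 / 4) ^ m * 2 := by
        intro m hm
        obtain ⟨x, hx, hqx⟩ := hq (2 * m) (by omega)
        have h1 := iter_contraction m x BVfixed
        rw [hqx, hPn] at h1
        refine h1.trans (mul_le_mul_of_nonneg_left ?_ (by positivity))
        calc dist x BVfixed ≤ dist x 0 + dist 0 BVfixed := dist_triangle _ _ _
          _ ≤ 1 + 1 := by
              refine add_le_add (Δ_bounded hx) ?_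
              rw [dist_comm]
              exact Δ_bounded fixed_mem_Δ
          _ = 2 := by norm_num
      have htend : Filter.Tendsto (fun m : ℕ => (3/4:ℝ) ^ m * 2) Filter.atTop (nhds 0) := by
        simpa using (tendsto_pow_atTop_nhds_zero_of_lt_one (by norm_num : (0:ℝ) ≤ 3/4)
          (by norm_num)).mul_const 2
      have h0 : dist q BVfixed ≤ 0 :=
        ge_of_tendsto htend (Filter.eventually_atTop.2 ⟨1, hdist⟩)
      exact eq_of_dist_eq_zero (le_antisymm h0 dist_nonneg)
    · intro hq n hn
      exact ⟨BVfixed, fixed_mem_Δ, (hPn n).trans hq.symm⟩
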